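/- Let ρ ∈ [0,1), J = 2·⌈1/(1-ρ)⌉, and α_n = 1 - 2/((1-ρ)(n+J)). For the SAM iteration x_0 = x, x_{n+1} = (1-α_n)f(x_n) + α_n T(x_n) in a W-hyperbolic space, with p a fixed point of T and M ≥ max{d(x,p), d(p,f(p))/(1-ρ)}, it holds for all n that d(T(x_n), x_n) ≤ 2M(J+2)/((1-ρ)(n+J)). -/

import Mathlib

set_option maxHeartbeats 1000000 in
theorem stmt8 {X : Type*} [MetricSpace X] (W : X → X → ℝ → X)
    (W1 : ∀ (x y z : X), ∀ l ∈ Set.Icc (0:ℝ) 1,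
      dist z (W x y l) ≤ (1 - l) * dist z x + l * dist z y)
    (W2 : ∀ (x y : X), ∀ l ∈ Set.Icc (0:ℝ) 1, ∀ m ∈ Set.Icc (0:ℝ) 1,
      dist (W x y l) (W x y m) = |l - m| * dist x y)
    (W3 : ∀ (x y : X), ∀ l ∈ Set.Icc (0:ℝ) 1, W x y l = W y x (1 - l))
    (W4 : ∀ (x y z w : X), ∀ l ∈ Set.Icc (0:ℝ) 1,
      dist (W x z l) (W y w l) ≤ (1 - l) * dist x y + l * dist z w)
    (C : Set X)
    (hC : ∀ x ∈ C, ∀ y ∈ C, ∀ l ∈ Set.Icc (0:ℝ) 1, W x y l ∈ C)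
    (T f : X → X) (hTC : ∀ x ∈ C, T x ∈ C) (hfC : ∀ x ∈ C, f x ∈ C)
    (hT : ∀ x ∈ C, ∀ y ∈ C, dist (T x) (T y) ≤ dist x y)
    (ρ : ℝ) (hρ : ρ ∈ Set.Ico (0:ℝ) 1)
    (hf : ∀ x ∈ C, ∀ y ∈ C, dist (f x) (f y) ≤ ρ * dist x y)
    (α : ℕ → ℝ)
    (x₀ : X) (hx₀ : x₀ ∈ C) (x : ℕ → X) (hx0 : x 0 = x₀)
    (J : ℕ) (hJ : J = 2 * ⌈1 / (1 - ρ)⌉₊)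
    (hα : ∀ n, α n = 1 - 2 / ((1 - ρ) * (n + J)))
    (hxrec : ∀ n, x (n + 1) = W (f (x n)) (T (x n)) (α n))
    (p : X) (hp : p ∈ C) (hfix : T p = p)
    (M : ℝ) (hM : 0 < M) (hM1 : dist x₀ p ≤ M) (hM2 : dist p (f p) / (1 - ρ) ≤ M) :
    ∀ n, dist (T (x n)) (x n) ≤ (2 * M * (J + 2)) / ((1 - ρ) * (n + J)) := by
  obtain ⟨hρ0, hρ1⟩ := hρ
  have hc0 : (0:ℝ) < 1 - ρ := by linarith
  have hc1 : (1:ℝ) - ρ ≤ 1 := by linarith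
  -- J ≥ 2 and (1-ρ)·J ≥ 2
  have hceil : 1 / (1 - ρ) ≤ (⌈1 / (1 - ρ)⌉₊ : ℝ) := Nat.le_ceil _
  have hceil1 : (1:ℝ) ≤ (⌈1 / (1 - ρ)⌉₊ : ℝ) := by
    have : (1:ℝ) ≤ 1 / (1 - ρ) := by
      rw [le_div_iff₀ hc0]; linarith
    linarith
  have hJ2 : (2:ℝ) ≤ (J : ℝ) := by
    rw [hJ]; push_cast; linarith
  have hcJ : (2:ℝ) ≤ (1 - ρ) * (J : ℝ) := by
    rw [hJ]; push_cast
    have h := mul_le_mul_of_nonneg_left hceil (le_of_lt hc0)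
    rw [mul_one_div, div_self (ne_of_gt hc0)] at h
    nlinarith
  have hs2 : ∀ n : ℕ, (2:ℝ) ≤ (1 - ρ) * ((n : ℝ) + J) := by
    intro n
    have hn : (0:ℝ) ≤ (n : ℝ) := Nat.cast_nonneg n
    nlinarith
  have hs0 : ∀ n : ℕ, (0:ℝ) < (1 - ρ) * ((n : ℝ) + J) := fun n => lt_of_lt_of_le two_pos (hs2 n)
  have hα01 : ∀ n, α n ∈ Set.Icc (0:ℝ) 1 := by
    intro n
    rw [hα]
    constructor
    · have h1 : 2 / ((1 - ρ) * ((n:ℝ) + J)) ≤ 1 := by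
        rw [div_le_one (hs0 n)]; exact hs2 n
      linarith
    · have h2 : 0 ≤ 2 / ((1 - ρ) * ((n:ℝ) + J)) := by positivity
      linarith
  have hxC : ∀ n, x n ∈ C := by
    intro n
    induction n with
    | zero => rw [hx0]; exact hx₀
    | succ n ih => rw [hxrec]; exact hC _ (hfC _ ih) _ (hTC _ ih) _ (hα01 n)
  have hpf : dist p (f p) ≤ (1 - ρ) * M := by
    rw [div_le_iff₀ hc0] at hM2; linarith
  -- boundedness
  have hbound : ∀ n, dist (x n) p ≤ M := by
    intro n
    induction n with
    | zero => rw [hx0]; exact hM1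
    | succ n ih =>
      rw [hxrec, dist_comm]
      have h1 := W1 (f (x n)) (T (x n)) p (α n) (hα01 n)
      have h2 : dist p (f (x n)) ≤ (1 - ρ) * M + ρ * M := by
        calc dist p (f (x n)) ≤ dist p (f p) + dist (f p) (f (x n)) := dist_triangle _ _ _
        _ ≤ (1 - ρ) * M + ρ * dist p (x n) := add_le_add hpf (hf p hp _ (hxC n))
        _ ≤ (1 - ρ) * M + ρ * M := by
            have : dist p (x n) ≤ M := by rw [dist_comm]; exact ih
            nlinarith
      have h3 : dist p (T (x n)) ≤ M := by
        calc dist p (T (x n)) = dist (T p) (T (x n)) := by rw [hfix]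
        _ ≤ dist p (x n) := hT p hp _ (hxC n)
        _ ≤ M := by rw [dist_comm]; exact ih
      obtain ⟨ha0, ha1⟩ := hα01 n
      nlinarith [h1, mul_le_mul_of_nonneg_left h2 (by linarith : (0:ℝ) ≤ 1 - α n),
        mul_le_mul_of_nonneg_left h3 ha0]
  have hfb : ∀ n, dist p (f (x n)) ≤ M := by
    intro n
    calc dist p (f (x n)) ≤ dist p (f p) + dist (f p) (f (x n)) := dist_triangle _ _ _
    _ ≤ (1 - ρ) * M + ρ * dist p (x n) := add_le_add hpf (hf p hp _ (hxC n))
    _ ≤ M := by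
        have : dist p (x n) ≤ M := by rw [dist_comm]; exact hbound n
        nlinarith
  have hTb : ∀ n, dist p (T (x n)) ≤ M := by
    intro n
    calc dist p (T (x n)) = dist (T p) (T (x n)) := by rw [hfix]
    _ ≤ dist p (x n) := hT p hp _ (hxC n)
    _ ≤ M := by rw [dist_comm]; exact hbound n
  have hfT : ∀ n, dist (f (x n)) (T (x n)) ≤ 2 * M := by
    intro n
    calc dist (f (x n)) (T (x n)) ≤ dist (f (x n)) p + dist p (T (x n)) := dist_triangle _ _ _
    _ ≤ M + M := add_le_add (by rw [dist_comm]; exact hfb n) (hTb n)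
    _ = 2 * M := by ring
  -- rate for consecutive distances
  have hb : ∀ n, dist (x (n+1)) (x n) ≤ 2 * M * J / ((1 - ρ) * ((n:ℝ) + J)) := by
    intro n
    induction n with
    | zero =>
      have h1 := W1 (f (x 0)) (T (x 0)) (x 0) (α 0) (hα01 0)
      have h2 : dist (x 0) (f (x 0)) ≤ 2 * M := by
        calc dist (x 0) (f (x 0)) ≤ dist (x 0) p + dist p (f (x 0)) := dist_triangle _ _ _
        _ ≤ M + M := add_le_add (hbound 0) (hfb 0)
        _ = 2 * M := by ring
      have h3 : dist (x 0) (T (x 0)) ≤ 2 * M := by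
        calc dist (x 0) (T (x 0)) ≤ dist (x 0) p + dist p (T (x 0)) := dist_triangle _ _ _
        _ ≤ M + M := add_le_add (hbound 0) (hTb 0)
        _ = 2 * M := by ring
      have h4 : dist (x 1) (x 0) ≤ 2 * M := by
        rw [dist_comm, hxrec 0]
        obtain ⟨ha0, ha1⟩ := hα01 0
        nlinarith [mul_le_mul_of_nonneg_left h2 (by linarith : (0:ℝ) ≤ 1 - α 0),
          mul_le_mul_of_nonneg_left h3 ha0]
      have h5 : 2 * M ≤ 2 * M * J / ((1 - ρ) * ((0:ℕ) + (J:ℝ))) := by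
        rw [le_div_iff₀ (hs0 0)]
        push_cast
        have hle : (1 - ρ) * (0 + (J:ℝ)) ≤ (J:ℝ) := by nlinarith
        nlinarith [mul_le_mul_of_nonneg_left hle (by positivity : (0:ℝ) ≤ 2 * M)]
      calc dist (x 1) (x 0) ≤ 2 * M := h4
      _ ≤ _ := by push_cast at h5 ⊢; exact h5
    | succ n ih =>
      set b := dist (x (n+1)) (x n) with hbdef
      set s := (1 - ρ) * ((n:ℝ) + J) with hsdef
      set t := (1 - ρ) * ((n:ℝ) + 1 + J) with htdef
      have hts : t = s + (1 - ρ) := by rw [hsdef, htdef]; ring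
      have hs2' : (2:ℝ) ≤ s := hs2 n
      have ht2 : (2:ℝ) ≤ t := by rw [hts]; linarith
      have hspos : (0:ℝ) < s := by linarith
      have htpos : (0:ℝ) < t := by linarith
      have hαn : α n = 1 - 2 / s := by rw [hα]
      have hαn1 : α (n+1) = 1 - 2 / t := by rw [hα, htdef]; push_cast; ring_nf
      -- triangle split
      have t1 : dist (x (n+2)) (x (n+1)) ≤
          dist (x (n+2)) (W (f (x n)) (T (x n)) (α (n+1)))
          + dist (W (f (x n)) (T (x n)) (α (n+1))) (x (n+1)) := dist_triangle _ _ _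
      have t2 : dist (x (n+2)) (W (f (x n)) (T (x n)) (α (n+1))) ≤
          (1 - α (n+1)) * dist (f (x (n+1))) (f (x n)) + α (n+1) * dist (T (x (n+1))) (T (x n)) := by
        rw [hxrec (n+1)]
        exact W4 (f (x (n+1))) (f (x n)) (T (x (n+1))) (T (x n)) (α (n+1)) (hα01 (n+1))
      have t3 : dist (W (f (x n)) (T (x n)) (α (n+1))) (x (n+1)) =
          |α (n+1) - α n| * dist (f (x n)) (T (x n)) := by
        rw [hxrec n]
        exact W2 (f (x n)) (T (x n)) (α (n+1)) (hα01 (n+1)) (α n) (hα01 n)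
      have t4 : dist (f (x (n+1))) (f (x n)) ≤ ρ * b := hf _ (hxC _) _ (hxC _)
      have t5 : dist (T (x (n+1))) (T (x n)) ≤ b := hT _ (hxC _) _ (hxC _)
      have t6 : dist (f (x n)) (T (x n)) ≤ 2 * M := hfT n
      have hΔ : α (n+1) - α n = 2 / s - 2 / t := by rw [hαn, hαn1]; ring
      have hΔ0 : 0 ≤ α (n+1) - α n := by
        rw [hΔ]
        have : 2 / t ≤ 2 / s := by
          apply div_le_div_of_nonneg_left (by norm_num) hspos
          linarith
        linarith
      have habs : |α (n+1) - α n| = 2 / s - 2 / t := by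
        rw [abs_of_nonneg hΔ0, hΔ]
      rw [habs] at t3
      obtain ⟨ha0, ha1⟩ := hα01 (n+1)
      have hb0 : (0:ℝ) ≤ b := dist_nonneg
      -- main chain
      have chain : dist (x (n+2)) (x (n+1)) ≤
          (1 - α (n+1)) * (ρ * b) + α (n+1) * b + (2 / s - 2 / t) * (2 * M) := by
        have e1 : (1 - α (n+1)) * dist (f (x (n+1))) (f (x n)) ≤ (1 - α (n+1)) * (ρ * b) :=
          mul_le_mul_of_nonneg_left t4 (by linarith)
        have e2 : α (n+1) * dist (T (x (n+1))) (T (x n)) ≤ α (n+1) * b :=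
          mul_le_mul_of_nonneg_left t5 ha0
        have e3 : (2 / s - 2 / t) * dist (f (x n)) (T (x n)) ≤ (2 / s - 2 / t) * (2 * M) := by
          apply mul_le_mul_of_nonneg_left t6
          rw [hΔ] at hΔ0; exact hΔ0
        calc dist (x (n+2)) (x (n+1)) ≤ _ := t1
        _ ≤ ((1 - α (n+1)) * dist (f (x (n+1))) (f (x n)) + α (n+1) * dist (T (x (n+1))) (T (x n)))
            + (2 / s - 2 / t) * dist (f (x n)) (T (x n)) := by
            rw [t3]; exact add_le_add_left t2 _
        _ ≤ _ := by linarith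
      -- rewrite α (n+1)
      rw [hαn1] at chain
      have chain2 : dist (x (n+2)) (x (n+1)) ≤
          (1 - 2 * (1 - ρ) / t) * b + (2 / s - 2 / t) * (2 * M) := by
        have : (1 - (1 - 2 / t)) * (ρ * b) + (1 - 2 / t) * b = (1 - 2 * (1 - ρ) / t) * b := by
          field_simp; ring
        linarith [chain, this.symm.le]
      have hcoef : (0:ℝ) ≤ 1 - 2 * (1 - ρ) / t := by
        have : 2 * (1 - ρ) / t ≤ 1 := by
          rw [div_le_one htpos]; linarith
        linarith
      have ihb : b ≤ 2 * M * J / s := ih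
      have chain3 : dist (x (n+2)) (x (n+1)) ≤
          (1 - 2 * (1 - ρ) / t) * (2 * M * J / s) + (2 / s - 2 / t) * (2 * M) :=
        le_trans chain2 (by nlinarith [mul_le_mul_of_nonneg_left ihb hcoef])
      have final : (1 - 2 * (1 - ρ) / t) * (2 * M * J / s) + (2 / s - 2 / t) * (2 * M)
          ≤ 2 * M * J / t := by
        rw [show (1 - 2 * (1 - ρ) / t) * (2 * M * J / s) + (2 / s - 2 / t) * (2 * M)
            = ((t - 2 * (1 - ρ)) * (2 * M * (J:ℝ)) + 4 * M * (t - s)) / (s * t) by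
          field_simp; ring]
        rw [div_le_div_iff₀ (by positivity) htpos]
        have hkey : (0:ℝ) ≤ 2 * M * (1 - ρ) * ((J:ℝ) - 2) := by
          apply mul_nonneg
          · positivity
          · linarith
        rw [show s = t - (1 - ρ) by rw [hts]; ring]
        nlinarith [mul_nonneg hkey htpos.le]
      have goal_eq : (2:ℝ) * M * J / ((1 - ρ) * (((n:ℕ)+1 : ℕ) + (J:ℝ))) = 2 * M * J / t := by
        rw [htdef]; push_cast; ring_nf
      calc dist (x (n+2)) (x (n+1)) ≤ (1 - 2 * (1 - ρ) / t) * (2 * M * J / s) + (2 / s - 2 / t) * (2 * M) := chain3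
      _ ≤ 2 * M * J / t := final
      _ = _ := by push_cast [htdef]; ring_nf
  -- conclusion
  intro n
  have h1 : dist (T (x n)) (x (n+1)) ≤ (1 - α n) * (2 * M) := by
    rw [hxrec]
    have h := W1 (f (x n)) (T (x n)) (T (x n)) (α n) (hα01 n)
    rw [dist_self] at h
    have : dist (T (x n)) (f (x n)) ≤ 2 * M := by rw [dist_comm]; exact hfT n
    obtain ⟨ha0, ha1⟩ := hα01 n
    nlinarith [mul_le_mul_of_nonneg_left this (by linarith : (0:ℝ) ≤ 1 - α n)]
  have h2 := hb n
  have h3 : (1 - α n) = 2 / ((1 - ρ) * ((n:ℝ) + J)) := by rw [hα]; ring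
  rw [h3] at h1
  have tri : dist (T (x n)) (x n) ≤ dist (T (x n)) (x (n+1)) + dist (x (n+1)) (x n) :=
    dist_triangle _ _ _
  have heq : 2 / ((1 - ρ) * ((n:ℝ) + J)) * (2 * M) + 2 * M * J / ((1 - ρ) * ((n:ℝ) + J))
      = 2 * M * ((J:ℝ) + 2) / ((1 - ρ) * ((n:ℝ) + J)) := by
    field_simp
    ring
  calc dist (T (x n)) (x n) ≤ _ := tri
  _ ≤ 2 / ((1 - ρ) * ((n:ℝ) + J)) * (2 * M) + 2 * M * J / ((1 - ρ) * ((n:ℝ) + J)) :=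
      add_le_add h1 h2
  _ = _ := heq
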